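/- Let f : ℍ → ℍ be of class C² on an open set Ω of quaternions with nonzero imaginary part, of the form f(p) = u(p) + ι(p)·v(p) with u, v real-valued, and suppose D_l f = −2v/r on Ω. Then the real-valued function p ↦ v(p)/r is harmonic on Ω, i.e. Δ(v/r) = 0. -/

import Mathlib

open Quaternion

noncomputable section

/-- The basis quaternion `i`. -/
def qi : ℍ[ℝ] := ⟨0,1,0,0⟩
/-- The basis quaternion `j`. -/
def qj : ℍ[ℝ] := ⟨0,0,1,0⟩
/-- The basis quaternion `k`. -/
def qk : ℍ[ℝ] := ⟨0,0,0,1⟩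

/-- Partial derivative of `f : ℍ → ℍ` in the real (`t`) direction. -/
def pt (f : ℍ[ℝ] → ℍ[ℝ]) (p : ℍ[ℝ]) : ℍ[ℝ] := fderiv ℝ f p 1
/-- Partial derivative in the `i` (`x`) direction. -/
def px (f : ℍ[ℝ] → ℍ[ℝ]) (p : ℍ[ℝ]) : ℍ[ℝ] := fderiv ℝ f p qi
/-- Partial derivative in the `j` (`y`) direction. -/
def py (f : ℍ[ℝ] → ℍ[ℝ]) (p : ℍ[ℝ]) : ℍ[ℝ] := fderiv ℝ f p qj
/-- Partial derivative in the `k` (`z`) direction. -/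
def pz (f : ℍ[ℝ] → ℍ[ℝ]) (p : ℍ[ℝ]) : ℍ[ℝ] := fderiv ℝ f p qk

/-- The left Fueter operator `D_l f = ∂f/∂t + i ∂f/∂x + j ∂f/∂y + k ∂f/∂z`. -/
def Dl (f : ℍ[ℝ] → ℍ[ℝ]) (p : ℍ[ℝ]) : ℍ[ℝ] :=
  pt f p + qi * px f p + qj * py f p + qk * pz f p
/-- The right Fueter operator `D_r f = ∂f/∂t + (∂f/∂x) i + (∂f/∂y) j + (∂f/∂z) k`. -/
def Dr (f : ℍ[ℝ] → ℍ[ℝ]) (p : ℍ[ℝ]) : ℍ[ℝ] :=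
  pt f p + px f p * qi + py f p * qj + pz f p * qk
/-- The conjugate left Fueter operator `D̄_l f = ∂f/∂t - i ∂f/∂x - j ∂f/∂y - k ∂f/∂z`. -/
def Dlbar (f : ℍ[ℝ] → ℍ[ℝ]) (p : ℍ[ℝ]) : ℍ[ℝ] :=
  pt f p - qi * px f p - qj * py f p - qk * pz f p
/-- The Laplacian `Δf = ∂²f/∂t² + ∂²f/∂x² + ∂²f/∂y² + ∂²f/∂z²`. -/
def Lap (f : ℍ[ℝ] → ℍ[ℝ]) (p : ℍ[ℝ]) : ℍ[ℝ] :=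
  pt (pt f) p + px (px f) p + py (py f) p + pz (pz f) p

/-- `r = √(x² + y² + z²)`, the norm of the imaginary part of `p`. -/
def rad (p : ℍ[ℝ]) : ℝ := Real.sqrt (p.imI^2 + p.imJ^2 + p.imK^2)
/-- `ι(p) = (x i + y j + z k)/r`, the normalized imaginary part of `p`. -/
def iot (p : ℍ[ℝ]) : ℍ[ℝ] := (rad p)⁻¹ • Quaternion.im p

set_option maxHeartbeats 1000000
set_option synthInstance.maxHeartbeats 400000

def imIC : ℍ[ℝ] →L[ℝ] ℝ := ⟨QuaternionAlgebra.imIₗ _ _ _, Quaternion.continuous_imI⟩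
def imJC : ℍ[ℝ] →L[ℝ] ℝ := ⟨QuaternionAlgebra.imJₗ _ _ _, Quaternion.continuous_imJ⟩
def imKC : ℍ[ℝ] →L[ℝ] ℝ := ⟨QuaternionAlgebra.imKₗ _ _ _, Quaternion.continuous_imK⟩
def reC : ℍ[ℝ] →L[ℝ] ℝ := ⟨QuaternionAlgebra.reₗ _ _ _, Quaternion.continuous_re⟩
def imC : ℍ[ℝ] →L[ℝ] ℍ[ℝ] :=
  ⟨{ toFun := Quaternion.im
     map_add' := fun a b => by ext <;> simp
     map_smul' := fun r a => by ext <;> simp }, Quaternion.continuous_im⟩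
def coeC : ℝ →L[ℝ] ℍ[ℝ] := ⟨Algebra.linearMap ℝ ℍ[ℝ], Quaternion.continuous_coe⟩


variable {F F' : Type*} [NormedAddCommGroup F] [NormedSpace ℝ F]
  [NormedAddCommGroup F'] [NormedSpace ℝ F']

def D2 (f : ℍ[ℝ] → F) (p a b : ℍ[ℝ]) : F := fderiv ℝ (fun q => fderiv ℝ f q b) p a

variable {Ω : Set ℍ[ℝ]} {p : ℍ[ℝ]} {f g : ℍ[ℝ] → F}

lemma diffAt (hΩ : IsOpen Ω) (hf : ContDiffOn ℝ 2 f Ω) (hp : p ∈ Ω) :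
    DifferentiableAt ℝ f p :=
  (hf.contDiffAt (hΩ.mem_nhds hp)).differentiableAt two_ne_zero

lemma fderiv_apply_diffAt (hΩ : IsOpen Ω) (hf : ContDiffOn ℝ 2 f Ω) (hp : p ∈ Ω) (b : ℍ[ℝ]) :
    DifferentiableAt ℝ (fun q => fderiv ℝ f q b) p := by
  have h1 : ContDiffAt ℝ 1 (fderiv ℝ f) p :=
    (hf.contDiffAt (hΩ.mem_nhds hp)).fderiv_right (by norm_num)
  exact ((ContinuousLinearMap.apply ℝ F b).differentiableAt).comp p (h1.differentiableAt one_ne_zero)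

lemma D2_symm (hΩ : IsOpen Ω) (hf : ContDiffOn ℝ 2 f Ω) (hp : p ∈ Ω) (a b : ℍ[ℝ]) :
    D2 f p a b = D2 f p b a := by
  have hd : DifferentiableAt ℝ (fderiv ℝ f) p :=
    (((hf.contDiffAt (hΩ.mem_nhds hp)).fderiv_right (by norm_num) : ContDiffAt ℝ 1 _ p)).differentiableAt one_ne_zero
  have key : ∀ c d : ℍ[ℝ], D2 f p c d = fderiv ℝ (fderiv ℝ f) p c d := by
    intro c d
    have h0 := fderiv_clm_apply (c := fderiv ℝ f) (u := fun _ => d) hd (differentiableAt_const d)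
    have h2 : fderiv ℝ (fun q => fderiv ℝ f q d) p
        = (fderiv ℝ f p).comp (fderiv ℝ (fun _ : ℍ[ℝ] => d) p)
          + (fderiv ℝ (fderiv ℝ f) p).flip d := h0
    rw [D2, h2]
    simp
  rw [key a b, key b a]
  exact (hf.contDiffAt (hΩ.mem_nhds hp)).isSymmSndFDerivAt (by simp [minSmoothness_of_isRCLikeNormedField]) a b

lemma fderiv_eventually_congr (hΩ : IsOpen Ω) (hp : p ∈ Ω) (h : Set.EqOn f g Ω) (b : ℍ[ℝ]) :
    (fun q => fderiv ℝ f q b) =ᶠ[nhds p] (fun q => fderiv ℝ g q b) := by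
  filter_upwards [hΩ.mem_nhds hp] with q hq
  have : f =ᶠ[nhds q] g := by
    filter_upwards [hΩ.mem_nhds hq] with r hr using h hr
  rw [this.fderiv_eq]

lemma D2_congr (hΩ : IsOpen Ω) (hp : p ∈ Ω) (h : Set.EqOn f g Ω) (a b : ℍ[ℝ]) :
    D2 f p a b = D2 g p a b := by
  rw [D2, D2, (fderiv_eventually_congr hΩ hp h b).fderiv_eq]

lemma D2_add (hΩ : IsOpen Ω) (hf : ContDiffOn ℝ 2 f Ω) (hg : ContDiffOn ℝ 2 g Ω)
    (hp : p ∈ Ω) (a b : ℍ[ℝ]) :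
    D2 (fun q => f q + g q) p a b = D2 f p a b + D2 g p a b := by
  have hev : (fun q => fderiv ℝ (fun q => f q + g q) q b)
      =ᶠ[nhds p] (fun q => fderiv ℝ f q b + fderiv ℝ g q b) := by
    filter_upwards [hΩ.mem_nhds hp] with q hq
    rw [fderiv_fun_add (diffAt hΩ hf hq) (diffAt hΩ hg hq)]
    simp
  rw [D2, hev.fderiv_eq,
    fderiv_fun_add (fderiv_apply_diffAt hΩ hf hp b) (fderiv_apply_diffAt hΩ hg hp b)]
  simp [D2]

lemma D2_clm_comp {s : ℍ[ℝ] → F} (L : F →L[ℝ] F') (hΩ : IsOpen Ω)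
    (hs : ContDiffOn ℝ 2 s Ω) (hp : p ∈ Ω) (a b : ℍ[ℝ]) :
    D2 (fun q => L (s q)) p a b = L (D2 s p a b) := by
  have hev : (fun q => fderiv ℝ (fun q => L (s q)) q b)
      =ᶠ[nhds p] (fun q => L (fderiv ℝ s q b)) := by
    filter_upwards [hΩ.mem_nhds hp] with q hq
    have : HasFDerivAt (fun q => L (s q)) (L.comp (fderiv ℝ s q)) q :=
      L.hasFDerivAt.comp q (diffAt hΩ hs hq).hasFDerivAt
    rw [this.fderiv]
    rfl
  rw [D2, hev.fderiv_eq]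
  have : HasFDerivAt (fun q => L (fderiv ℝ s q b))
      (L.comp (fderiv ℝ (fun q => fderiv ℝ s q b) p)) p :=
    L.hasFDerivAt.comp p (fderiv_apply_diffAt hΩ hs hp b).hasFDerivAt
  rw [this.fderiv]
  rfl

lemma D2_const_mul {g : ℍ[ℝ] → ℍ[ℝ]} (hΩ : IsOpen Ω) (hg : ContDiffOn ℝ 2 g Ω)
    (hp : p ∈ Ω) (c a b : ℍ[ℝ]) :
    D2 (fun q => c * g q) p a b = c * D2 g p a b := by
  have hev : (fun q => fderiv ℝ (fun q => c * g q) q b)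
      =ᶠ[nhds p] (fun q => c * fderiv ℝ g q b) := by
    filter_upwards [hΩ.mem_nhds hp] with q hq
    rw [fderiv_const_mul (diffAt hΩ hg hq) c]
    simp
  rw [D2, hev.fderiv_eq, fderiv_const_mul (fderiv_apply_diffAt hΩ hg hp b) c]
  simp [D2]

lemma D2_smul_im {G : ℍ[ℝ] → ℝ} (hΩ : IsOpen Ω) (hG : ContDiffOn ℝ 2 G Ω)
    (hp : p ∈ Ω) (e : ℍ[ℝ]) :
    D2 (fun q => G q • Quaternion.im q) p e e
      = D2 G p e e • Quaternion.im p + (2 * fderiv ℝ G p e) • Quaternion.im e := by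
  have him : ∀ q : ℍ[ℝ], HasFDerivAt (fun q : ℍ[ℝ] => Quaternion.im q) imC q :=
    fun q => imC.hasFDerivAt
  have hev : (fun q => fderiv ℝ (fun q => G q • Quaternion.im q) q e)
      =ᶠ[nhds p] (fun q => (fderiv ℝ G q e) • Quaternion.im q + G q • Quaternion.im e) := by
    filter_upwards [hΩ.mem_nhds hp] with q hq
    have h1 : HasFDerivAt (fun q => G q • Quaternion.im q)
        (G q • imC + (fderiv ℝ G q).smulRight (Quaternion.im q)) q :=
      (diffAt hΩ hG hq).hasFDerivAt.smul (him q)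
    rw [h1.fderiv]
    simp [imC]
    abel
  rw [D2, hev.fderiv_eq]
  have h2 : HasFDerivAt (fun q => (fderiv ℝ G q e) • Quaternion.im q)
      ((fderiv ℝ G p e) • imC
        + (fderiv ℝ (fun q => fderiv ℝ G q e) p).smulRight (Quaternion.im p)) p :=
    (fderiv_apply_diffAt hΩ hG hp e).hasFDerivAt.smul (him p)
  have h3 : HasFDerivAt (fun q => G q • Quaternion.im e)
      ((fderiv ℝ G p).smulRight (Quaternion.im e)) p :=
    (diffAt hΩ hG hp).hasFDerivAt.smul_const (Quaternion.im e)
  rw [(h2.fun_add h3).fderiv]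
  show (fderiv ℝ G p e) • imC e + (fderiv ℝ (fun q => fderiv ℝ G q e) p e) • Quaternion.im p
      + (fderiv ℝ G p e) • Quaternion.im e = _
  rw [D2]
  show (fderiv ℝ G p e) • Quaternion.im e + _ + (fderiv ℝ G p e) • Quaternion.im e = _
  rw [two_mul, add_smul]
  abel


variable {f g : ℍ[ℝ] → ℍ[ℝ]}

lemma Lap_eq : Lap f p = D2 f p 1 1 + D2 f p qi qi + D2 f p qj qj + D2 f p qk qk := rfl

lemma Lap_congr (hΩ : IsOpen Ω) (hp : p ∈ Ω) (h : Set.EqOn f g Ω) : Lap f p = Lap g p := by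
  rw [Lap_eq, Lap_eq, D2_congr hΩ hp h, D2_congr hΩ hp h, D2_congr hΩ hp h, D2_congr hΩ hp h]

lemma Dlbar_congr (hΩ : IsOpen Ω) (hp : p ∈ Ω) (h : Set.EqOn f g Ω) : Dlbar f p = Dlbar g p := by
  have h1 : ∀ b, fderiv ℝ f p b = fderiv ℝ g p b := by
    intro b
    have : f =ᶠ[nhds p] g := by
      filter_upwards [hΩ.mem_nhds hp] with r hr using h hr
    rw [this.fderiv_eq]
  show fderiv ℝ f p 1 - qi * fderiv ℝ f p qi - qj * fderiv ℝ f p qj - qk * fderiv ℝ f p qk = _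
  rw [h1, h1, h1, h1]
  rfl

lemma Lap_add (hΩ : IsOpen Ω) (hf : ContDiffOn ℝ 2 f Ω) (hg : ContDiffOn ℝ 2 g Ω)
    (hp : p ∈ Ω) : Lap (fun q => f q + g q) p = Lap f p + Lap g p := by
  rw [Lap_eq, Lap_eq, Lap_eq, D2_add hΩ hf hg hp, D2_add hΩ hf hg hp, D2_add hΩ hf hg hp,
    D2_add hΩ hf hg hp]
  abel

lemma Lap_coe {s : ℍ[ℝ] → ℝ} (hΩ : IsOpen Ω) (hs : ContDiffOn ℝ 2 s Ω) (hp : p ∈ Ω) :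
    Lap (fun q => coeC (s q)) p
      = coeC (D2 s p 1 1 + D2 s p qi qi + D2 s p qj qj + D2 s p qk qk) := by
  rw [Lap_eq, D2_clm_comp coeC hΩ hs hp, D2_clm_comp coeC hΩ hs hp,
    D2_clm_comp coeC hΩ hs hp, D2_clm_comp coeC hΩ hs hp]
  simp

lemma hii : qi * qi = -1 := by ext <;> simp only [Quaternion.re_mul, Quaternion.imI_mul, Quaternion.imJ_mul, Quaternion.imK_mul, Quaternion.re_neg, Quaternion.imI_neg, Quaternion.imJ_neg, Quaternion.imK_neg] <;> simp [qi]
lemma hjj : qj * qj = -1 := by ext <;> simp only [Quaternion.re_mul, Quaternion.imI_mul, Quaternion.imJ_mul, Quaternion.imK_mul, Quaternion.re_neg, Quaternion.imI_neg, Quaternion.imJ_neg, Quaternion.imK_neg] <;> simp [qj]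
lemma hkk : qk * qk = -1 := by ext <;> simp only [Quaternion.re_mul, Quaternion.imI_mul, Quaternion.imJ_mul, Quaternion.imK_mul, Quaternion.re_neg, Quaternion.imI_neg, Quaternion.imJ_neg, Quaternion.imK_neg] <;> simp [qk]
lemma hij : qi * qj = qk := by ext <;> simp only [Quaternion.re_mul, Quaternion.imI_mul, Quaternion.imJ_mul, Quaternion.imK_mul, Quaternion.re_neg, Quaternion.imI_neg, Quaternion.imJ_neg, Quaternion.imK_neg] <;> simp [qi, qj, qk]
lemma hji : qj * qi = -qk := by ext <;> simp only [Quaternion.re_mul, Quaternion.imI_mul, Quaternion.imJ_mul, Quaternion.imK_mul, Quaternion.re_neg, Quaternion.imI_neg, Quaternion.imJ_neg, Quaternion.imK_neg] <;> simp [qi, qj, qk]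
lemma hik : qi * qk = -qj := by ext <;> simp only [Quaternion.re_mul, Quaternion.imI_mul, Quaternion.imJ_mul, Quaternion.imK_mul, Quaternion.re_neg, Quaternion.imI_neg, Quaternion.imJ_neg, Quaternion.imK_neg] <;> simp [qi, qj, qk]
lemma hki : qk * qi = qj := by ext <;> simp only [Quaternion.re_mul, Quaternion.imI_mul, Quaternion.imJ_mul, Quaternion.imK_mul, Quaternion.re_neg, Quaternion.imI_neg, Quaternion.imJ_neg, Quaternion.imK_neg] <;> simp [qi, qj, qk]
lemma hjk : qj * qk = qi := by ext <;> simp only [Quaternion.re_mul, Quaternion.imI_mul, Quaternion.imJ_mul, Quaternion.imK_mul, Quaternion.re_neg, Quaternion.imI_neg, Quaternion.imJ_neg, Quaternion.imK_neg] <;> simp [qi, qj, qk]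
lemma hkj : qk * qj = -qi := by ext <;> simp only [Quaternion.re_mul, Quaternion.imI_mul, Quaternion.imJ_mul, Quaternion.imK_mul, Quaternion.re_neg, Quaternion.imI_neg, Quaternion.imJ_neg, Quaternion.imK_neg] <;> simp [qi, qj, qk]

lemma dlbar_dl (hΩ : IsOpen Ω) (hf : ContDiffOn ℝ 2 f Ω) (hp : p ∈ Ω) :
    Dlbar (Dl f) p = Lap f p := by
  have hd : ∀ b, DifferentiableAt ℝ (fun q => fderiv ℝ f q b) p :=
    fun b => fderiv_apply_diffAt hΩ hf hp b
  have hE : ∀ a, fderiv ℝ (Dl f) p a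
      = D2 f p a 1 + qi * D2 f p a qi + qj * D2 f p a qj + qk * D2 f p a qk := by
    intro a
    have H : HasFDerivAt (Dl f)
        (((fderiv ℝ (fun q => fderiv ℝ f q 1) p
          + qi • fderiv ℝ (fun q => fderiv ℝ f q qi) p)
          + qj • fderiv ℝ (fun q => fderiv ℝ f q qj) p)
          + qk • fderiv ℝ (fun q => fderiv ℝ f q qk) p) p :=
      (((hd 1).hasFDerivAt.add ((hd qi).hasFDerivAt.const_mul qi)).add
        ((hd qj).hasFDerivAt.const_mul qj)).add ((hd qk).hasFDerivAt.const_mul qk)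
    rw [H.fderiv]
    simp only [ContinuousLinearMap.add_apply, ContinuousLinearMap.smul_apply, smul_eq_mul, D2]
  have hsy : ∀ a b : ℍ[ℝ], D2 f p a b = D2 f p b a := D2_symm hΩ hf hp
  have e1 : Dlbar (Dl f) p = fderiv ℝ (Dl f) p 1 - qi * fderiv ℝ (Dl f) p qi
      - qj * fderiv ℝ (Dl f) p qj - qk * fderiv ℝ (Dl f) p qk := rfl
  rw [Lap_eq, e1, hE 1, hE qi, hE qj, hE qk,
    hsy qi 1, hsy qj 1, hsy qk 1, hsy qj qi, hsy qk qi, hsy qk qj]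
  simp only [mul_add, ← mul_assoc, hii, hij, hik, hji, hjk, hki, hkj, hjj, hkk,
    neg_one_mul, neg_mul, neg_neg, one_mul]
  abel


lemma imC_coeC (r : ℝ) : imC (coeC r) = 0 := by ext <;> simp [imC, coeC] <;> rfl
lemma imC_im (x : ℍ[ℝ]) : imC (Quaternion.im x) = Quaternion.im x := rfl
lemma imC_qi : imC qi = qi := rfl
lemma imC_qj : imC qj = qj := rfl
lemma imC_qk : imC qk = qk := rfl


/-- If `f` is `C²` on an open set `Ω` of quaternions with nonzero imaginary
part, has the form `f = u + ι v` with `u, v` real-valued, and satisfies `D_l f = -2v/r` on `Ω`,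
then `v/r` is harmonic on `Ω`. -/
theorem v_over_r_harmonic (Ω : Set ℍ[ℝ]) (hΩ : IsOpen Ω)
    (hΩim : ∀ p ∈ Ω, Quaternion.im p ≠ 0)
    (f : ℍ[ℝ] → ℍ[ℝ]) (hf : ContDiffOn ℝ 2 f Ω)
    (u v : ℍ[ℝ] → ℝ)
    (hform : ∀ p ∈ Ω, f p = (u p : ℍ[ℝ]) + iot p * (v p : ℍ[ℝ]))
    (hDl : ∀ p ∈ Ω, Dl f p = ((-2 * v p / rad p : ℝ) : ℍ[ℝ])) :
    ∀ p ∈ Ω, Lap (fun q => ((v q / rad q : ℝ) : ℍ[ℝ])) p = 0 := by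
  intro p hp
  have hden_ne : ∀ q ∈ Ω, q.imI^2 + q.imJ^2 + q.imK^2 ≠ 0 := by
    intro q hq h0
    apply hΩim q hq
    have hI : q.imI = 0 := by nlinarith [sq_nonneg q.imI, sq_nonneg q.imJ, sq_nonneg q.imK]
    have hJ : q.imJ = 0 := by nlinarith [sq_nonneg q.imI, sq_nonneg q.imJ, sq_nonneg q.imK]
    have hK : q.imK = 0 := by nlinarith [sq_nonneg q.imI, sq_nonneg q.imJ, sq_nonneg q.imK]
    ext <;> simp [hI, hJ, hK]
  have hrad_ne : ∀ q ∈ Ω, rad q ≠ 0 := by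
    intro q hq
    exact ne_of_gt (Real.sqrt_pos.mpr
      (lt_of_le_of_ne (by positivity) (Ne.symm (hden_ne q hq))))
  have hrad_sq : ∀ q : ℍ[ℝ], rad q ^ 2 = q.imI^2 + q.imJ^2 + q.imK^2 :=
    fun q => Real.sq_sqrt (by positivity)
  -- decomposition of f on Ω
  have hcomp : ∀ q ∈ Ω, f q = ((u q : ℍ[ℝ])) + (v q * (rad q)⁻¹) • Quaternion.im q := by
    intro q hq
    rw [hform q hq, iot, mul_coe_eq_smul, smul_smul, mul_comm]
  set G : ℍ[ℝ] → ℝ :=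
    fun q => (q.imI * (f q).imI + q.imJ * (f q).imJ + q.imK * (f q).imK) /
      (q.imI^2 + q.imJ^2 + q.imK^2) with hGdef
  have hGval : ∀ q ∈ Ω, G q = v q / rad q := by
    intro q hq
    have h1 : (f q).imI = v q * (rad q)⁻¹ * q.imI := by rw [hcomp q hq]; simp
    have h2 : (f q).imJ = v q * (rad q)⁻¹ * q.imJ := by rw [hcomp q hq]; simp
    have h3 : (f q).imK = v q * (rad q)⁻¹ * q.imK := by rw [hcomp q hq]; simp
    have h4 : q.imI * (f q).imI + q.imJ * (f q).imJ + q.imK * (f q).imK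
        = (v q / rad q) * (q.imI^2 + q.imJ^2 + q.imK^2) := by
      rw [h1, h2, h3, div_eq_mul_inv]; ring
    rw [hGdef]
    simp only
    rw [h4, mul_div_assoc, div_self (hden_ne q hq), mul_one]
  have hG : ContDiffOn ℝ 2 G Ω := by
    apply ContDiffOn.div
    · exact ((imIC.contDiff.contDiffOn.mul (imIC.contDiff.comp_contDiffOn hf)).add
        (imJC.contDiff.contDiffOn.mul (imJC.contDiff.comp_contDiffOn hf))).add
        (imKC.contDiff.contDiffOn.mul (imKC.contDiff.comp_contDiffOn hf))
    · exact ((imIC.contDiff.contDiffOn.pow 2).add (imJC.contDiff.contDiffOn.pow 2)).add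
        (imKC.contDiff.contDiffOn.pow 2)
    · exact hden_ne
  set A : ℍ[ℝ] → ℍ[ℝ] := fun q => coeC (reC (f q)) with hA
  set B : ℍ[ℝ] → ℍ[ℝ] := fun q => G q • Quaternion.im q with hB
  have hAc : ContDiffOn ℝ 2 A Ω := (coeC.contDiff.comp reC.contDiff).comp_contDiffOn hf
  have hBc : ContDiffOn ℝ 2 B Ω := hG.smul (imC.contDiff.contDiffOn)
  have hsplit : Set.EqOn f (fun q => A q + B q) Ω := by
    intro q hq
    have h0 := hcomp q hq
    have hre : reC (f q) = u q := by
      show (f q).re = u q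
      rw [h0]; simp
    show f q = coeC (reC (f q)) + G q • Quaternion.im q
    rw [hre, hGval q hq, div_eq_mul_inv]
    exact h0
  have hLf : Lap f p = Lap A p + Lap B p := by
    rw [Lap_congr hΩ hp hsplit, Lap_add hΩ hAc hBc hp]
  have hsA : ContDiffOn ℝ 2 (fun q => reC (f q)) Ω := reC.contDiff.comp_contDiffOn hf
  have hLA : Lap A p = coeC (D2 (fun q => reC (f q)) p 1 1 + D2 (fun q => reC (f q)) p qi qi
      + D2 (fun q => reC (f q)) p qj qj + D2 (fun q => reC (f q)) p qk qk) :=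
    Lap_coe hΩ hsA hp
  set c : ℝ := D2 G p 1 1 + D2 G p qi qi + D2 G p qj qj + D2 G p qk qk with hcdef
  have hLB : Lap B p = c • Quaternion.im p + (2 * fderiv ℝ G p qi) • qi
      + (2 * fderiv ℝ G p qj) • qj + (2 * fderiv ℝ G p qk) • qk := by
    rw [Lap_eq, D2_smul_im hΩ hG hp 1, D2_smul_im hΩ hG hp qi, D2_smul_im hΩ hG hp qj,
      D2_smul_im hΩ hG hp qk, show Quaternion.im (1:ℍ[ℝ]) = 0 from rfl,
      show Quaternion.im qi = qi from rfl, show Quaternion.im qj = qj from rfl,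
      show Quaternion.im qk = qk from rfl, hcdef]
    simp only [smul_zero, add_zero, add_smul]
    abel
  set H : ℍ[ℝ] → ℍ[ℝ] := fun q => coeC (-2 * G q) with hH
  have hDlH : Set.EqOn (Dl f) H Ω := by
    intro q hq
    rw [hDl q hq]
    show ((-2 * v q / rad q : ℝ) : ℍ[ℝ]) = coeC (-2 * G q)
    rw [show coeC (-2 * G q) = ((-2 * G q : ℝ) : ℍ[ℝ]) from rfl]
    exact congrArg _ (by rw [hGval q hq]; ring)
  have hFA : Lap f p = Dlbar H p := by
    rw [← dlbar_dl hΩ hf hp, Dlbar_congr hΩ hp hDlH]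
  have hder : ∀ e, fderiv ℝ H p e = coeC (-2 * fderiv ℝ G p e) := by
    intro e
    have h1 : HasFDerivAt (fun q => -2 * G q) ((-2:ℝ) • fderiv ℝ G p) p :=
      (diffAt hΩ hG hp).hasFDerivAt.const_mul (-2)
    have h2 : HasFDerivAt H (coeC.comp ((-2:ℝ) • fderiv ℝ G p)) p :=
      coeC.hasFDerivAt.comp p h1
    rw [h2.fderiv]
    rfl
  have hDbarH : Dlbar H p = coeC (-2 * fderiv ℝ G p 1) + (2 * fderiv ℝ G p qi) • qi
      + (2 * fderiv ℝ G p qj) • qj + (2 * fderiv ℝ G p qk) • qk := by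
    show fderiv ℝ H p 1 - qi * fderiv ℝ H p qi - qj * fderiv ℝ H p qj
        - qk * fderiv ℝ H p qk = _
    rw [hder, hder, hder, hder]
    simp only [show ∀ r : ℝ, coeC r = (r : ℍ[ℝ]) from fun _ => rfl, mul_coe_eq_smul]
    module
  rw [hLf] at hFA
  rw [hLA, hLB, hDbarH] at hFA
  have hE' := congrArg imC hFA
  simp only [map_add, map_smul, imC_coeC, imC_im, imC_qi, imC_qj, imC_qk] at hE'
  have hczero : c • Quaternion.im p = 0 := by
    have h4 := sub_eq_zero.mpr hE'
    rw [← h4]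
    abel
  have hc0 : c = 0 := by
    rcases smul_eq_zero.mp hczero with h | h
    · exact h
    · exact absurd h (hΩim p hp)
  have htgt : Set.EqOn (fun q => ((v q / rad q : ℝ) : ℍ[ℝ])) (fun q => coeC (G q)) Ω := by
    intro q hq
    show ((v q / rad q : ℝ) : ℍ[ℝ]) = coeC (G q)
    rw [hGval q hq]
    rfl
  rw [Lap_congr hΩ hp htgt, Lap_coe hΩ hG hp, ← hcdef, hc0]
  simp
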